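/- The Lie complexity of the Thue–Morse word t satisfies: L_t(n) = 1 if n = 0 or n = 2^k with k ≥ 3; L_t(n) = 2 if n ∈ {1, 4} or n = 3·2^k with k ≥ 0; L_t(n) = 3 if n = 2; and L_t(n) = 0 otherwise. -/

import Mathlib

variable {α : Type*}

/-- `u` occurs in the infinite word `w` at position `i`. -/
def FactorAt (w : ℕ → α) (i : ℕ) (u : List α) : Prop :=
  u = (List.range u.length).map fun k => w (i + k)

/-- The set of (finite) factors of the right-infinite word `w`. -/
def Fac (w : ℕ → α) : Set (List α) := {u | ∃ i, FactorAt w i u}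

/-- The Lie complexity: the number of rotation classes of length-`n` words all of
whose members are factors of `w`. -/
noncomputable def LieComplexity (w : ℕ → α) (n : ℕ) : ℕ :=
  Set.ncard {q : Quotient (List.IsRotated.setoid α) |
    ∃ u : List α, Quotient.mk _ u = q ∧ u.length = n ∧ ∀ v, u.IsRotated v → v ∈ Fac w}

/-- The Thue–Morse word: `t n` is the parity of the number of 1's in the binary
expansion of `n`. -/
def thueMorse (n : ℕ) : ℕ := (Nat.digits 2 n).count 1 % 2

notation "t" => thueMorse

lemma tm_le_one (n : ℕ) : t n ≤ 1 := Nat.lt_succ_iff.mp (Nat.mod_lt _ (by norm_num))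

lemma tm_two_mul (n : ℕ) : t (2 * n) = t n := by
  rcases Nat.eq_zero_or_pos n with h | h
  · simp [h]
  · unfold thueMorse
    rw [show (2:ℕ) * n = 2 * n + 0 by ring, Nat.digits_def' (by norm_num) (by omega)]
    simp [Nat.mul_add_div, Nat.mul_add_mod]

lemma tm_two_mul_add_one (n : ℕ) : t (2 * n + 1) = 1 - t n := by
  unfold thueMorse
  rw [Nat.digits_def' (by norm_num) (by omega)]
  simp only [Nat.mul_add_mod, Nat.mul_add_div (by norm_num : (0:ℕ) < 2)]
  norm_num [List.count_cons]
  omega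

lemma tm_block (m : ℕ) : t (2*m) ≠ t (2*m+1) := by
  rw [tm_two_mul, tm_two_mul_add_one]
  have := tm_le_one m; omega

lemma tm_block' {j : ℕ} (hj : j % 2 = 0) : t j ≠ t (j+1) := by
  obtain ⟨m, rfl⟩ : ∃ m, j = 2*m := ⟨j/2, by omega⟩
  exact tm_block m

lemma factorAt_iff {w : ℕ → ℕ} {i : ℕ} {u : List ℕ} :
    FactorAt w i u ↔ ∀ k (h : k < u.length), u.get ⟨k, h⟩ = w (i + k) := by
  constructor
  · intro h k hk
    have := congrArg (fun l => l.getD k 0) h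
    simp only [List.getD_eq_getElem?_getD] at this
    rw [List.get_eq_getElem, ← List.getD_eq_getElem _ 0 hk, List.getD_eq_getElem?_getD, this]
    rw [List.getElem?_map, List.getElem?_range (by simpa using hk)]
    rfl
  · intro h
    apply List.ext_get (by simp)
    intro k h1 h2
    simpa using h k h1

lemma factorAt_getElem {w : ℕ → ℕ} {i : ℕ} {u : List ℕ} (h : FactorAt w i u)
    {k : ℕ} (hk : k < u.length) : u[k] = w (i + k) := by
  have := factorAt_iff.mp h k hk
  simpa [List.get_eq_getElem] using this

lemma fac_infix {w : ℕ → ℕ} {u v : List ℕ} (hu : u ∈ Fac w) (hv : v <:+: u) :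
    v ∈ Fac w := by
  obtain ⟨i, hi⟩ := hu
  obtain ⟨s, tl, rfl⟩ := hv
  rw [show s ++ v ++ tl = s ++ (v ++ tl) by simp] at hi
  refine ⟨i + s.length, factorAt_iff.mpr fun k hk => ?_⟩
  have hk' : s.length + k < (s ++ (v ++ tl)).length := by simp; omega
  have := factorAt_getElem hi hk'
  rw [List.getElem_append_right (le_add_right (le_refl s.length))] at this
  simp only [Nat.add_sub_cancel_left] at this
  rw [List.getElem_append_left (by omega)] at this
  simp only [List.get_eq_getElem]
  rw [this]; ring_nf

lemma fac_binary {u : List ℕ} (hu : u ∈ Fac t) : ∀ x ∈ u, x ≤ 1 := by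
  obtain ⟨i, hi⟩ := hu
  intro x hx
  obtain ⟨k, hk, rfl⟩ := List.getElem_of_mem hx
  rw [factorAt_getElem hi hk]
  exact tm_le_one _

def mu : List ℕ → List ℕ
  | [] => []
  | a :: l => a :: (1 - a) :: mu l

@[simp] lemma mu_nil : mu [] = [] := rfl
@[simp] lemma mu_cons (a : ℕ) (l : List ℕ) : mu (a :: l) = a :: (1 - a) :: mu l := rfl

@[simp] lemma mu_length (l : List ℕ) : (mu l).length = 2 * l.length := by
  induction l with
  | nil => rfl
  | cons a l ih => simp [ih]; ring

@[simp] lemma mu_append (l l' : List ℕ) : mu (l ++ l') = mu l ++ mu l' := by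
  induction l with
  | nil => rfl
  | cons a l ih => simp [ih]

lemma mu_getElem_even (l : List ℕ) (s : ℕ) (hs : s < l.length)
    (h2 : 2 * s < (mu l).length) : (mu l)[2 * s] = l[s] := by
  induction l generalizing s with
  | nil => simp at hs
  | cons a l ih =>
    rcases s with _ | s
    · simp
    · have hs' : s < l.length := by simpa using hs
      have h2' : 2 * s < (mu l).length := by simp; omega
      have : 2 * (s + 1) = (2 * s) + 1 + 1 := by ring
      simp only [mu_cons, this, List.getElem_cons_succ]
      exact ih s hs' h2'

lemma mu_getElem_odd (l : List ℕ) (s : ℕ) (hs : s < l.length)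
    (h2 : 2 * s + 1 < (mu l).length) : (mu l)[2 * s + 1] = 1 - l[s] := by
  induction l generalizing s with
  | nil => simp at hs
  | cons a l ih =>
    rcases s with _ | s
    · simp
    · have hs' : s < l.length := by simpa using hs
      have h2' : 2 * s + 1 < (mu l).length := by simp; omega
      have : 2 * (s + 1) + 1 = (2 * s + 1) + 1 + 1 := by ring
      simp only [mu_cons, this, List.getElem_cons_succ]
      exact ih s hs' h2'

/-- μ maps factors to factors. -/
lemma mu_fac {u : List ℕ} (hu : u ∈ Fac t) : mu u ∈ Fac t := by
  obtain ⟨i, hi⟩ := hu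
  refine ⟨2 * i, factorAt_iff.mpr fun k hk => ?_⟩
  rw [List.get_eq_getElem]
  rcases Nat.even_or_odd k with ⟨s, hs⟩ | ⟨s, hs⟩
  · have hs' : k = 2 * s := by omega
    subst hs'
    have hsl : s < u.length := by simp at hk; omega
    rw [mu_getElem_even u s hsl hk,
      factorAt_getElem hi hsl, show 2*i + 2*s = 2*(i+s) by ring, tm_two_mul]
  · subst hs
    have hsl : s < u.length := by simp at hk; omega
    rw [mu_getElem_odd u s hsl hk,
      factorAt_getElem hi hsl, show 2*i + (2*s+1) = 2*(i+s)+1 by ring, tm_two_mul_add_one]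

/-- From an even occurrence of `mu v`, get an occurrence of `v`. -/
lemma mu_fac_down {v : List ℕ} {j : ℕ} (h : FactorAt t (2 * j) (mu v)) :
    FactorAt t j v := by
  refine factorAt_iff.mpr fun s hs => ?_
  have h2 : 2 * s < (mu v).length := by simp; omega
  have := factorAt_getElem h h2
  rw [mu_getElem_even v s hs h2] at this
  rw [List.get_eq_getElem, this, show 2*j + 2*s = 2*(j+s) by ring, tm_two_mul]

lemma mu_isRotated {x y : List ℕ} (h : x ~r y) : mu x ~r mu y := by
  obtain ⟨k, rfl⟩ := h
  rw [← List.rotate_mod]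
  set m := k % x.length with hm
  rcases Nat.eq_zero_or_pos x.length with h0 | h0
  · obtain rfl := List.length_eq_zero_iff.mp h0
    simp
  have hml : m ≤ x.length := le_of_lt (by simpa [hm] using Nat.mod_lt k h0)
  rw [List.rotate_eq_drop_append_take hml, mu_append]
  conv_lhs => rw [← List.take_append_drop m x, mu_append]
  exact List.isRotated_append

section Concrete

lemma fac_concrete {i : ℕ} {u : List ℕ} (h : FactorAt t i u) : u ∈ Fac t := ⟨i, h⟩

lemma fA_00 : FactorAt t 5 [0,0] := by unfold FactorAt; norm_num [thueMorse, List.range_succ]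
lemma fA_11 : FactorAt t 1 [1,1] := by unfold FactorAt; norm_num [thueMorse, List.range_succ]
lemma fA_01 : FactorAt t 0 [0,1] := by unfold FactorAt; norm_num [thueMorse, List.range_succ]
lemma fA_10 : FactorAt t 2 [1,0] := by unfold FactorAt; norm_num [thueMorse, List.range_succ]
lemma fA_0 : FactorAt t 0 [0] := by unfold FactorAt; norm_num [thueMorse, List.range_succ]
lemma fA_1 : FactorAt t 1 [1] := by unfold FactorAt; norm_num [thueMorse, List.range_succ]
lemma fA_0101 : FactorAt t 10 [0,1,0,1] := by
  unfold FactorAt; norm_num [thueMorse, List.range_succ]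
lemma fA_1010 : FactorAt t 2 [1,0,1,0] := by
  unfold FactorAt; norm_num [thueMorse, List.range_succ]
lemma fA_sq1001 : FactorAt t 4 [1,0,0,1,1,0,0,1] := by
  unfold FactorAt; norm_num [thueMorse, List.range_succ]
lemma fA_sq010 : FactorAt t 15 [0,1,0,0,1,0] := by
  unfold FactorAt; norm_num [thueMorse, List.range_succ]
lemma fA_sq101 : FactorAt t 11 [1,0,1,1,0,1] := by
  unfold FactorAt; norm_num [thueMorse, List.range_succ]

lemma notFac_aaa (a : ℕ) : [a,a,a] ∉ Fac t := by
  rintro ⟨i, hi⟩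
  have h0 : t i = a := by simpa using (factorAt_getElem hi (by norm_num : 0 < ([a,a,a]:List ℕ).length)).symm
  have h1 : t (i+1) = a := by simpa using (factorAt_getElem hi (by norm_num : 1 < ([a,a,a]:List ℕ).length)).symm
  have h2 : t (i+2) = a := by simpa using (factorAt_getElem hi (by norm_num : 2 < ([a,a,a]:List ℕ).length)).symm
  rcases Nat.even_or_odd i with ⟨j, hj⟩ | ⟨j, hj⟩
  · exact tm_block j (by rw [show 2*j = i by omega, h0, h1])
  · exact tm_block (j+1) (by rw [show 2*(j+1) = i+1 by omega, h1, h2])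

lemma notFac_alt5 (a : ℕ) (ha : a ≤ 1) : [a,1-a,a,1-a,a] ∉ Fac t := by
  rintro ⟨i, hi⟩
  have len : ([a,1-a,a,1-a,a]:List ℕ).length = 5 := by norm_num
  have h0 : t i = a := by simpa using (factorAt_getElem hi (by omega : 0 < ([a,1-a,a,1-a,a]:List ℕ).length)).symm
  have h1 : t (i+1) = 1-a := by simpa using (factorAt_getElem hi (by omega : 1 < ([a,1-a,a,1-a,a]:List ℕ).length)).symm
  have h2 : t (i+2) = a := by simpa using (factorAt_getElem hi (by omega : 2 < ([a,1-a,a,1-a,a]:List ℕ).length)).symm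
  have h3 : t (i+3) = 1-a := by simpa using (factorAt_getElem hi (by omega : 3 < ([a,1-a,a,1-a,a]:List ℕ).length)).symm
  have h4 : t (i+4) = a := by simpa using (factorAt_getElem hi (by omega : 4 < ([a,1-a,a,1-a,a]:List ℕ).length)).symm
  rcases Nat.even_or_odd i with ⟨j, hj⟩ | ⟨j, hj⟩
  · -- even occurrence: t j = t (j+1) = t (j+2) = a
    apply notFac_aaa a
    refine ⟨j, factorAt_iff.mpr fun k hk => ?_⟩
    have hk3 : k < 3 := by simpa using hk
    interval_cases k
    · simpa [← tm_two_mul j, show 2*j = i by omega] using h0.symm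
    · simpa [← tm_two_mul (j+1), show 2*(j+1) = i+2 by omega] using h2.symm
    · simpa [← tm_two_mul (j+2), show 2*(j+2) = i+4 by omega] using h4.symm
  · -- odd occurrence: extend left; t j = t(j+1) = t(j+2) = 1 - a
    apply notFac_aaa (1-a)
    refine ⟨j, factorAt_iff.mpr fun k hk => ?_⟩
    have hk3 : k < 3 := by simpa using hk
    have e0 : t (2*j) ≠ t (2*j+1) := tm_block _
    rw [show 2*j+1 = i by omega, h0] at e0
    have v0 : t j = 1 - a := by
      have := tm_le_one (2*j)
      rw [← tm_two_mul j]; omega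
    have v1 : t (j+1) = 1 - a := by rw [← tm_two_mul (j+1), show 2*(j+1) = i+1 by omega, h1]
    have v2 : t (j+2) = 1 - a := by rw [← tm_two_mul (j+2), show 2*(j+2) = i+3 by omega, h3]
    interval_cases k
    · simpa using v0.symm
    · simpa using v1.symm
    · simpa using v2.symm

end Concrete

/-! ### Core cyclic-pair machinery -/

def AllRot (u : List ℕ) : Prop := ∀ v, u.IsRotated v → v ∈ Fac t

lemma allRot_fac {u : List ℕ} (h : AllRot u) : u ∈ Fac t := h u (List.IsRotated.refl u)

lemma allRot_of_isRotated {u v : List ℕ} (h : AllRot u) (hr : u ~r v) : AllRot v :=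
  fun x hx => h x (hr.trans hx)

lemma factorAt_getD {w : ℕ → ℕ} {j : ℕ} {u : List ℕ} (h : FactorAt w j u)
    {k : ℕ} (hk : k < u.length) : u.getD k 0 = w (j + k) := by
  rw [List.getD_eq_getElem _ _ hk]; exact factorAt_getElem h hk

/-- block pair constraint from an occurrence -/
lemma adj_of_factorAt {j : ℕ} {u : List ℕ} (h : FactorAt t j u) {s : ℕ}
    (hs : s + 1 < u.length) (hpar : (j + s) % 2 = 0) :
    u.getD s 0 ≠ u.getD (s+1) 0 := by
  rw [factorAt_getD h (by omega), factorAt_getD h hs, ← add_assoc]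
  exact tm_block' (by omega)

lemma getD_rotate (u : List ℕ) (k s : ℕ) (hs : s < u.length) :
    (u.rotate k).getD s 0 = u.getD ((s + k) % u.length) 0 := by
  have hn : 0 < u.length := by omega
  have h1 : s < (u.rotate k).length := by simpa using hs
  rw [List.getD_eq_getElem _ _ h1, List.getD_eq_getElem _ _ (Nat.mod_lt _ hn)]
  have := List.get_rotate u k ⟨s, h1⟩
  simpa using this

section PairArg

variable {u : List ℕ}

/-- pair constraint transported along a rotation occurrence -/
lemma rot_adj {k j s : ℕ} (hocc : FactorAt t j (u.rotate k))
    (hs : s + 1 < u.length) (hpar : (j + s) % 2 = 0) :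
    u.getD ((k + s) % u.length) 0 ≠ u.getD ((k + s + 1) % u.length) 0 := by
  have h2 : s + 1 < (u.rotate k).length := by simpa using hs
  have := adj_of_factorAt hocc h2 hpar
  rwa [getD_rotate u k s (by omega), getD_rotate u k (s+1) (by omega),
    show s + k = k + s by ring, show s + 1 + k = k + s + 1 by ring] at this

/-- The key forcing lemma: if `u` has an equal cyclic pair at `p`, then all cyclic
pairs at odd offset from `p` (or any offset if the length is odd) must differ. -/
lemma pair_diff (hAll : AllRot u) {n : ℕ} (hn : n = u.length) (hn5 : 5 ≤ n)
    {p : ℕ} (hp : u.getD (p % n) 0 = u.getD ((p+1) % n) 0)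
    {e : ℕ} (he1 : 1 ≤ e) (he2 : e ≤ n - 1) (hpar : e % 2 = 1 ∨ n % 2 = 1) :
    u.getD ((p+e) % n) 0 ≠ u.getD ((p+e+1) % n) 0 := by
  subst hn
  set n := u.length with hnn
  -- choose k, s, s'
  obtain ⟨k, s, s', hks, hks', hsn, hsn', hss⟩ :
      ∃ k s s', (k + s) % n = (p + e) % n ∧ (k + s') % n = p % n ∧
        s + 1 < n ∧ s' + 1 < n ∧ (s + s') % 2 = 1 := by
    rcases hpar with hodd | hnodd
    · rcases Nat.lt_or_ge e (n-1) with hlt | hge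
      · exact ⟨p, e, 0, rfl, by simp, by omega, by omega, by omega⟩
      · have he : e = n - 1 := by omega
        refine ⟨p + e, 0, 1, by simp, ?_, by omega, by omega, by omega⟩
        rw [show p + e + 1 = p + n by omega]
        exact Nat.add_mod_right p n
    · by_cases hodd : e % 2 = 1
      · rcases Nat.lt_or_ge e (n-1) with hlt | hge
        · exact ⟨p, e, 0, rfl, by simp, by omega, by omega, by omega⟩
        · refine ⟨p + e, 0, 1, by simp, ?_, by omega, by omega, by omega⟩
          rw [show p + e + 1 = p + n by omega]
          exact Nat.add_mod_right p n
      · refine ⟨p + e, 0, n - e, by simp, ?_, by omega, by omega, by omega⟩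
        rw [show p + e + (n - e) = p + n by omega]
        exact Nat.add_mod_right p n
  obtain ⟨j, hj⟩ := hAll (u.rotate k) ⟨k, rfl⟩
  -- the occurrence parity is forced odd at s'
  have hforce : (j + s') % 2 = 1 := by
    by_contra hc
    have hc0 : (j + s') % 2 = 0 := by omega
    apply rot_adj hj hsn' hc0
    rw [hks']
    have : (k + s' + 1) % n = (p + 1) % n := Nat.ModEq.add_right 1 hks'
    rw [this]
    exact hp
  have hs0 : (j + s) % 2 = 0 := by omega
  have := rot_adj hj hsn hs0
  rwa [hks, show (k + s + 1) % n = (p + e + 1) % n from Nat.ModEq.add_right 1 hks] at this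

/-- a factor of length ≥ 5 cannot have all adjacent letters distinct -/
lemma no_alt_five {w : List ℕ} (hw : w ∈ Fac t) (hlen : 5 ≤ w.length)
    (halt : ∀ s, s + 1 < w.length → w.getD s 0 ≠ w.getD (s+1) 0) : False := by
  have hbin : ∀ x ∈ w, x ≤ 1 := fac_binary hw
  obtain ⟨x0, x1, x2, x3, x4, rest, rfl⟩ :
      ∃ a b c d e r, w = a :: b :: c :: d :: e :: r := by
    rcases w with _ | ⟨a, w⟩; · simp at hlen
    rcases w with _ | ⟨b, w⟩; · simp at hlen
    rcases w with _ | ⟨c, w⟩; · simp at hlen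
    rcases w with _ | ⟨d, w⟩; · simp at hlen
    rcases w with _ | ⟨e, w⟩; · simp at hlen
    exact ⟨a, b, c, d, e, w, rfl⟩
  have b0 : x0 ≤ 1 := hbin _ (by simp)
  have b1 : x1 ≤ 1 := hbin _ (by simp)
  have b2 : x2 ≤ 1 := hbin _ (by simp)
  have b3 : x3 ≤ 1 := hbin _ (by simp)
  have b4 : x4 ≤ 1 := hbin _ (by simp)
  have e0 : x0 ≠ x1 := by simpa using halt 0 (by simp)
  have e1 : x1 ≠ x2 := by simpa using halt 1 (by simp)
  have e2 : x2 ≠ x3 := by simpa using halt 2 (by simp)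
  have e3 : x3 ≠ x4 := by simpa using halt 3 (by simp)
  have h1 : x1 = 1 - x0 := by omega
  have h2 : x2 = x0 := by omega
  have h3 : x3 = 1 - x0 := by omega
  have h4 : x4 = x0 := by omega
  exact notFac_alt5 x0 b0 (fac_infix hw ⟨[], rest, by simp [h1, h2, h3, h4]⟩)

end PairArg

lemma mu_getD_even (l : List ℕ) (s : ℕ) (hs : s < l.length) :
    (mu l).getD (2*s) 0 = l.getD s 0 := by
  have h2 : 2*s < (mu l).length := by simp; omega
  rw [List.getD_eq_getElem _ _ h2, List.getD_eq_getElem _ _ hs, mu_getElem_even l s hs h2]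

lemma mu_getD_odd (l : List ℕ) (s : ℕ) (hs : s < l.length) :
    (mu l).getD (2*s+1) 0 = 1 - l.getD s 0 := by
  have h2 : 2*s+1 < (mu l).length := by simp; omega
  rw [List.getD_eq_getElem _ _ h2, List.getD_eq_getElem _ _ hs, mu_getElem_odd l s hs h2]

/-- no equal cyclic pair leads to contradiction (length ≥ 5) -/
lemma exists_eq_pair {u : List ℕ} (hAll : AllRot u) (h5 : 5 ≤ u.length) :
    ∃ p, p < u.length ∧ u.getD p 0 = u.getD ((p+1) % u.length) 0 := by
  by_contra hex
  push_neg at hex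
  apply no_alt_five (allRot_fac hAll) h5
  intro s hs
  have := hex s (by omega)
  rwa [Nat.mod_eq_of_lt (by omega : s + 1 < u.length)] at this

/-- Structure theorem, odd case: no word of odd length ≥ 5 has all rotations factors. -/
theorem odd_case {u : List ℕ} (hAll : AllRot u) (h5 : 5 ≤ u.length)
    (hodd : u.length % 2 = 1) : False := by
  set n := u.length with hn
  obtain ⟨p, hpn, hp⟩ := exists_eq_pair hAll h5
  have hp' : u.getD (p % n) 0 = u.getD ((p+1) % n) 0 := by
    rwa [Nat.mod_eq_of_lt hpn]
  have hwfac : u.rotate ((p+1) % n) ∈ Fac t := hAll _ ⟨_, rfl⟩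
  apply no_alt_five hwfac (by simpa using h5)
  intro s hs
  have hsn : s + 1 < n := by simpa using hs
  rw [getD_rotate u _ s (by omega), getD_rotate u _ (s+1) (by omega)]
  rw [Nat.add_mod_mod, Nat.add_mod_mod,
    show s + (p+1) = p + (s+1) by ring, show s + 1 + (p + 1) = p + (s+1) + 1 by ring]
  exact pair_diff hAll hn h5 hp' (by omega) (by omega) (Or.inr hodd)

/-- Structure theorem, even case. -/
theorem even_case {u : List ℕ} (hAll : AllRot u) (h5 : 5 ≤ u.length)
    (heven : u.length % 2 = 0) :
    ∃ v, 2 * v.length = u.length ∧ AllRot v ∧ u ~r mu v := by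
  set n := u.length with hn
  obtain ⟨p, hpn, hp⟩ := exists_eq_pair hAll h5
  have hp' : u.getD (p % n) 0 = u.getD ((p+1) % n) 0 := by
    rwa [Nat.mod_eq_of_lt hpn]
  set w := u.rotate ((p+1) % n) with hwdef
  have hwlen : w.length = n := by simp [hwdef, hn]
  have hrotw : u ~r w := ⟨_, rfl⟩
  have hwfac : w ∈ Fac t := hAll _ hrotw
  have hwbin : ∀ x ∈ w, x ≤ 1 := fac_binary hwfac
  have hwb : ∀ k, k < n → w.getD k 0 ≤ 1 := fun k hk => by
    rw [List.getD_eq_getElem _ _ (by omega : k < w.length)]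
    exact hwbin _ (List.getElem_mem _)
  have hadj : ∀ m, 2*m+1 < n → w.getD (2*m) 0 ≠ w.getD (2*m+1) 0 := by
    intro m hm
    rw [hwdef, getD_rotate u _ (2*m) (by omega), getD_rotate u _ (2*m+1) (by omega),
      Nat.add_mod_mod, Nat.add_mod_mod,
      show 2*m + (p+1) = p + (2*m+1) by ring, show 2*m + 1 + (p + 1) = p + (2*m+1) + 1 by ring]
    exact pair_diff hAll hn h5 hp' (by omega) (by omega) (Or.inl (by omega))
  set v := (List.range (n/2)).map (fun m => w.getD (2*m) 0) with hvdef
  have hvlen : v.length = n/2 := by simp [hvdef]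
  have hvget : ∀ m, m < n/2 → v.getD m 0 = w.getD (2*m) 0 := by
    intro m hm
    rw [List.getD_eq_getElem _ _ (by omega : m < v.length)]
    simp [hvdef]
  have hmu : mu v = w := by
    apply List.ext_getElem (by simp [hvlen, hwlen]; omega)
    intro k hk1 hk2
    have hkn : k < n := by omega
    rw [← List.getD_eq_getElem _ 0 hk1, ← List.getD_eq_getElem _ 0 hk2]
    rcases Nat.even_or_odd k with ⟨m, hm⟩ | ⟨m, hm⟩
    · rw [show k = 2*m by omega, mu_getD_even v m (by omega), hvget m (by omega)]
    · rw [show k = 2*m+1 by omega, mu_getD_odd v m (by omega), hvget m (by omega)]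
      have := hadj m (by omega)
      have := hwb (2*m) (by omega)
      have := hwb (2*m+1) (by omega)
      omega
  have hvbin : ∀ x ∈ v, x ≤ 1 := by
    intro x hx
    simp only [hvdef, List.mem_map, List.mem_range] at hx
    obtain ⟨m, hm, rfl⟩ := hx
    exact hwb (2*m) (by omega)
  have hrot : u ~r mu v := hmu ▸ hrotw
  refine ⟨v, by omega, ?_, hrot⟩
  intro v' hv'
  obtain ⟨j, hj⟩ := hAll (mu v') (hrot.trans (mu_isRotated hv'))
  have hlv' : v'.length = n / 2 := by rw [← hvlen]; exact hv'.perm.length_eq.symm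
  have hv'bin : ∀ x ∈ v', x ≤ 1 := fun x hx => hvbin x (hv'.perm.mem_iff.mpr hx)
  have hv'b : ∀ k, k < n/2 → v'.getD k 0 ≤ 1 := fun k hk => by
    rw [List.getD_eq_getElem _ _ (by omega : k < v'.length)]
    exact hv'bin _ (List.getElem_mem _)
  have hmulen : (mu v').length = n := by simp [hlv']; omega
  rcases Nat.even_or_odd j with ⟨j', hj'⟩ | ⟨j', hj'⟩
  · exact ⟨j', mu_fac_down (by rwa [show 2*j' = j by omega])⟩
  · exfalso
    apply no_alt_five ⟨j, hj⟩ (by omega)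
    intro s hs
    have hsn : s + 1 < n := by omega
    rcases Nat.even_or_odd s with ⟨m, hm⟩ | ⟨m, hm⟩
    · rw [show s = 2*m by omega, show 2*m+1 = 2*m+1 from rfl,
        mu_getD_even v' m (by omega), mu_getD_odd v' m (by omega)]
      have := hv'b m (by omega)
      omega
    · exact adj_of_factorAt hj (by omega) (by omega)

/-! ### mu rotation reflection and squares -/

lemma mu_take (l : List ℕ) (q : ℕ) : (mu l).take (2*q) = mu (l.take q) := by
  induction l generalizing q with
  | nil => simp
  | cons a l ih =>
    rcases q with _ | q
    · simp
    · rw [show 2*(q+1) = (2*q)+1+1 by ring]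
      simp [ih]

lemma mu_drop (l : List ℕ) (q : ℕ) : (mu l).drop (2*q) = mu (l.drop q) := by
  induction l generalizing q with
  | nil => simp
  | cons a l ih =>
    rcases q with _ | q
    · simp
    · rw [show 2*(q+1) = (2*q)+1+1 by ring]
      simp [ih]

lemma mu_rotate (l : List ℕ) (q : ℕ) : mu (l.rotate q) = (mu l).rotate (2*q) := by
  rcases Nat.eq_zero_or_pos l.length with h0 | h0
  · obtain rfl := List.length_eq_zero_iff.mp h0; simp
  rw [← List.rotate_mod l q, ← List.rotate_mod (mu l) (2*q)]
  have hml : (mu l).length = 2 * l.length := mu_length l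
  have h2 : 2*q % (mu l).length = 2 * (q % l.length) := by
    rw [hml, Nat.mul_mod_mul_left]
  rw [h2]
  have hq : q % l.length ≤ l.length := le_of_lt (Nat.mod_lt _ h0)
  rw [List.rotate_eq_drop_append_take hq,
    List.rotate_eq_drop_append_take (by omega : 2 * (q % l.length) ≤ (mu l).length),
    mu_append, mu_take, mu_drop]

lemma mu_inj {X Z : List ℕ} (h : mu X = mu Z) : X = Z := by
  have hlen : X.length = Z.length := by
    have := congrArg List.length h
    simp only [mu_length] at this
    omega
  apply List.ext_getElem hlen
  intro k hk1 hk2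
  rw [← List.getD_eq_getElem _ 0 hk1, ← List.getD_eq_getElem _ 0 hk2,
    ← mu_getD_even X k hk1, ← mu_getD_even Z k hk2, h]

lemma mu_binary' : ∀ (l : List ℕ), (∀ x ∈ l, x ≤ 1) → ∀ x ∈ mu l, x ≤ 1
  | [], _ => by simp
  | a :: l, hl => by
    intro x hx
    simp only [mu_cons, List.mem_cons] at hx
    rcases hx with rfl | rfl | hx'
    · exact hl _ (by simp)
    · omega
    · exact mu_binary' l (fun y hy => hl y (by simp [hy])) x hx'

lemma mu_binary {l : List ℕ} (hl : ∀ x ∈ l, x ≤ 1) : ∀ x ∈ mu l, x ≤ 1 :=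
  mu_binary' l hl

lemma mu_not_replicate {A : List ℕ} (hA : A ≠ []) (c : ℕ) :
    mu A ≠ List.replicate (mu A).length c := by
  rcases A with _ | ⟨a, l⟩
  · exact absurd rfl hA
  intro h
  rw [show (mu (a :: l)).length = (2*l.length) + 1 + 1 by simp only [mu_length, List.length_cons]; ring,
    List.replicate_succ, List.replicate_succ] at h
  simp only [mu_cons, List.cons.injEq] at h
  obtain ⟨h1, h2, -⟩ := h
  omega

/-- reflection: rotated mu-images come from rotated words, except constants -/
lemma mu_reflect {X Y : List ℕ} (hX : ∀ x ∈ X, x ≤ 1) (h : mu X ~r mu Y) :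
    X ~r Y ∨ ∃ c, X = List.replicate X.length c := by
  obtain ⟨r, hr⟩ := h
  have hlen : X.length = Y.length := by
    have := congrArg List.length hr
    simp only [List.length_rotate, mu_length] at this
    omega
  rcases Nat.eq_zero_or_pos X.length with h0 | h0
  · obtain rfl := List.length_eq_zero_iff.mp h0
    obtain rfl := List.length_eq_zero_iff.mp hlen.symm
    exact Or.inl (List.IsRotated.refl _)
  rw [← List.rotate_mod] at hr
  have hml : (mu X).length = 2 * X.length := mu_length X
  have hrlt : r % (mu X).length < 2 * X.length := by rw [← hml]; exact Nat.mod_lt _ (by omega)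
  rcases Nat.even_or_odd (r % (mu X).length) with ⟨q, hq⟩ | ⟨q, hq⟩
  · left
    have : mu (X.rotate q) = mu Y := by
      rw [mu_rotate, show 2*q = r % (mu X).length by omega]
      exact hr
    exact ⟨q, mu_inj this⟩
  · right
    -- mu Y = ((mu X).rotate (2q)).rotate 1 = (mu X').rotate 1
    set X' := X.rotate q with hX'
    have hmu' : (mu X').rotate 1 = mu Y := by
      rw [hX', mu_rotate, List.rotate_rotate, show 2*q+1 = r % (mu X).length by omega]
      exact hr
    have hX'len : X'.length = X.length := by simp [hX']
    have hX'bin : ∀ x ∈ X', x ≤ 1 := fun x hx => hX x (List.mem_rotate.mp hx)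
    -- derive X' constant
    have hconst : ∀ s, s < X.length → X'.getD s 0 = X'.getD 0 0 := by
      intro s hs
      induction s with
      | zero => rfl
      | succ s ih =>
        have hsx : s < X.length := by omega
        have key : X'.getD (s+1) 0 = X'.getD s 0 := by
          have hb1 : ∀ k, k < X.length → X'.getD k 0 ≤ 1 := fun k hk => by
            rw [List.getD_eq_getElem _ _ (by omega : k < X'.length)]
            exact hX'bin _ (List.getElem_mem _)
          -- Y_s = 1 - X'_s
          have e1 : Y.getD s 0 = 1 - X'.getD s 0 := by
            rw [← mu_getD_even Y s (by omega), ← hmu',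
              getD_rotate _ 1 (2*s) (by rw [mu_length, hX'len]; omega)]
            rw [mu_length, hX'len]
            rw [Nat.mod_eq_of_lt (by omega : 2*s+1 < 2*X.length)]
            exact mu_getD_odd X' s (by omega)
          -- 1 - Y_s = X'_{s+1}
          have e2 : 1 - Y.getD s 0 = X'.getD (s+1) 0 := by
            rw [← mu_getD_odd Y s (by omega), ← hmu',
              getD_rotate _ 1 (2*s+1) (by rw [mu_length, hX'len]; omega)]
            rw [mu_length, hX'len]
            rw [Nat.mod_eq_of_lt (by omega : 2*s+1+1 < 2*X.length),
              show 2*s+1+1 = 2*(s+1) by ring]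
            exact mu_getD_even X' (s+1) (by omega)
          have := hb1 s hsx
          omega
        rw [key, ih hsx]
    have : X' = List.replicate X'.length (X'.getD 0 0) := by
      apply List.ext_getElem (by simp)
      intro k hk1 hk2
      rw [List.getElem_replicate, ← List.getD_eq_getElem _ 0 hk1]
      exact hconst k (by omega)
    refine ⟨X'.getD 0 0, ?_⟩
    have hmem : ∀ b ∈ X, b = X'.getD 0 0 := by
      intro b hb
      have hb' : b ∈ X' := by rw [hX']; exact List.mem_rotate.mpr hb
      rw [this] at hb'
      exact List.eq_of_mem_replicate hb'
    exact List.eq_replicate_of_mem hmem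

/-! ### squares give AllRot; iterates -/

lemma allRot_of_sq {u : List ℕ} (h : (u ++ u) ∈ Fac t) : AllRot u := by
  rintro v ⟨k, rfl⟩
  rcases Nat.eq_zero_or_pos u.length with h0 | h0
  · obtain rfl := List.length_eq_zero_iff.mp h0
    exact ⟨0, by simp [FactorAt]⟩
  rw [← List.rotate_mod]
  set m := k % u.length with hm
  have hml : m ≤ u.length := le_of_lt (Nat.mod_lt _ h0)
  rw [List.rotate_eq_drop_append_take hml]
  apply fac_infix h
  refine ⟨u.take m, u.drop m, ?_⟩
  have huu : u ++ u = (u.take m ++ u.drop m) ++ (u.take m ++ u.drop m) := by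
    rw [List.take_append_drop]
  rw [huu]
  simp only [List.append_assoc]

lemma iter_mu_fac {x : List ℕ} (hx : x ∈ Fac t) (k : ℕ) : mu^[k] x ∈ Fac t := by
  induction k with
  | zero => exact hx
  | succ k ih => rw [Function.iterate_succ_apply']; exact mu_fac ih

lemma iter_mu_sq_allRot {x : List ℕ} (hx : (x ++ x) ∈ Fac t) (k : ℕ) :
    AllRot (mu^[k] x) := by
  apply allRot_of_sq
  have : mu^[k] x ++ mu^[k] x = mu^[k] (x ++ x) := by
    induction k with
    | zero => rfl
    | succ k ih =>
        simp only [Function.iterate_succ_apply']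
        rw [← ih, mu_append]
  rw [this]
  exact iter_mu_fac hx k

lemma iter_mu_length (x : List ℕ) (k : ℕ) : (mu^[k] x).length = 2^k * x.length := by
  induction k with
  | zero => simp
  | succ k ih => rw [Function.iterate_succ_apply', mu_length, ih, pow_succ]; ring

lemma iter_mu_binary {x : List ℕ} (hx : ∀ y ∈ x, y ≤ 1) (k : ℕ) :
    ∀ y ∈ mu^[k] x, y ≤ 1 := by
  induction k with
  | zero => exact hx
  | succ k ih => rw [Function.iterate_succ_apply']; exact mu_binary ih

lemma iter_mu_isRotated {x y : List ℕ} (h : x ~r y) (k : ℕ) : mu^[k] x ~r mu^[k] y := by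
  induction k with
  | zero => exact h
  | succ k ih => rw [Function.iterate_succ_apply', Function.iterate_succ_apply']
                 exact mu_isRotated ih

/-- key distinctness -/
lemma iter_mu_not_rot (k : ℕ) : ¬ (mu^[k] [0,1,0] ~r mu^[k] [1,0,1]) := by
  induction k with
  | zero => decide
  | succ k ih =>
    rw [Function.iterate_succ_apply', Function.iterate_succ_apply']
    intro h
    rcases mu_reflect (iter_mu_binary (by decide) k) h with h' | ⟨c, hc⟩
    · exact ih h'
    · rcases k with _ | k
      · rw [Function.iterate_zero_apply] at hc
        rw [show (List.replicate ([0,1,0]:List ℕ).length c) = [c,c,c] from rfl] at hc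
        simp only [List.cons.injEq] at hc
        omega
      · rw [Function.iterate_succ_apply'] at hc
        refine mu_not_replicate (fun hnil => ?_) c hc
        have := congrArg List.length hnil
        rw [iter_mu_length] at this
        simp at this

/-! ### class-level sets -/

def Scl (n : ℕ) : Set (Quotient (List.IsRotated.setoid ℕ)) :=
  {q | ∃ u : List ℕ, Quotient.mk _ u = q ∧ u.length = n ∧ AllRot u}

lemma clEq {a b : List ℕ} :
    (Quotient.mk (List.IsRotated.setoid ℕ) a = Quotient.mk _ b) ↔ a ~r b :=
  ⟨fun h => Quotient.exact h, fun h => Quotient.sound (by exact h)⟩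

def muCl : Quotient (List.IsRotated.setoid ℕ) → Quotient (List.IsRotated.setoid ℕ) :=
  Quotient.map mu (fun _ _ h => mu_isRotated h)

lemma muCl_mk (u : List ℕ) :
    muCl (Quotient.mk _ u) = Quotient.mk _ (mu u) := rfl

lemma Scl_odd (n : ℕ) (h5 : 5 ≤ n) (hodd : n % 2 = 1) : Scl n = ∅ := by
  ext q
  simp only [Set.mem_empty_iff_false, iff_false]
  rintro ⟨u, rfl, hlen, hAll⟩
  exact odd_case hAll (hlen ▸ h5) (hlen ▸ hodd)

lemma Scl_even_sub {n : ℕ} (h5 : 5 ≤ n) (he : n % 2 = 0) :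
    Scl n ⊆ muCl '' (Scl (n/2)) := by
  rintro q ⟨u, rfl, hlen, hAll⟩
  obtain ⟨v, hvlen, hvAll, hrot⟩ := even_case hAll (hlen ▸ h5) (hlen ▸ he)
  refine ⟨Quotient.mk _ v, ⟨v, rfl, by omega, hvAll⟩, ?_⟩
  rw [muCl_mk, clEq]
  exact hrot.symm

/-! ### base cases -/

lemma fac_nil : ([] : List ℕ) ∈ Fac t := ⟨0, rfl⟩

lemma allRot_of_forall {u : List ℕ} (h0 : 0 < u.length)
    (h : ∀ m, m < u.length → u.rotate m ∈ Fac t) : AllRot u := by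
  rintro v ⟨k, rfl⟩
  rw [← List.rotate_mod]
  exact h _ (Nat.mod_lt _ h0)

lemma bad_word {u r : List ℕ} (hAll : AllRot u) (hr : u.IsRotated r) (a : ℕ)
    (hinf : [a,a,a] <:+: r) : False := notFac_aaa a (fac_infix (hAll r hr) hinf)

lemma binary_shape4 {u : List ℕ} (hlen : u.length = 4) (hbin : ∀ x ∈ u, x ≤ 1) :
    ∃ a b c d, (a ≤ 1 ∧ b ≤ 1 ∧ c ≤ 1 ∧ d ≤ 1) ∧ u = [a,b,c,d] := by
  rcases u with _|⟨a,u⟩; · simp at hlen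
  rcases u with _|⟨b,u⟩; · simp at hlen
  rcases u with _|⟨c,u⟩; · simp at hlen
  rcases u with _|⟨d,u⟩; · simp at hlen
  rcases u with _|⟨e,u⟩; swap; · simp at hlen
  exact ⟨a,b,c,d, ⟨hbin a (by simp), hbin b (by simp), hbin c (by simp), hbin d (by simp)⟩, rfl⟩

lemma binary_shape3 {u : List ℕ} (hlen : u.length = 3) (hbin : ∀ x ∈ u, x ≤ 1) :
    ∃ a b c, (a ≤ 1 ∧ b ≤ 1 ∧ c ≤ 1) ∧ u = [a,b,c] := by
  rcases u with _|⟨a,u⟩; · simp at hlen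
  rcases u with _|⟨b,u⟩; · simp at hlen
  rcases u with _|⟨c,u⟩; · simp at hlen
  rcases u with _|⟨d,u⟩; swap; · simp at hlen
  exact ⟨a,b,c, ⟨hbin a (by simp), hbin b (by simp), hbin c (by simp)⟩, rfl⟩

lemma Scl_zero : Scl 0 = {Quotient.mk _ ([] : List ℕ)} := by
  ext q
  simp only [Set.mem_singleton_iff]
  constructor
  · rintro ⟨u, rfl, hlen, -⟩
    obtain rfl := List.length_eq_zero_iff.mp hlen
    rfl
  · rintro rfl
    exact ⟨[], rfl, rfl, fun v hv => by
      obtain ⟨k, rfl⟩ := hv; simpa using fac_nil⟩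

lemma Scl_one : Scl 1 = {Quotient.mk _ [0], Quotient.mk _ [1]} := by
  ext q
  constructor
  · rintro ⟨u, rfl, hlen, hAll⟩
    have hbin := fac_binary (allRot_fac hAll)
    obtain ⟨a, ha, rfl⟩ : ∃ a, a ≤ 1 ∧ u = [a] := by
      rcases u with _|⟨a,u⟩; · simp at hlen
      rcases u with _|⟨b,u⟩; swap; · simp at hlen
      exact ⟨a, hbin a (by simp), rfl⟩
    interval_cases a
    · exact Set.mem_insert_iff.mpr (Or.inl rfl)
    · exact Set.mem_insert_iff.mpr (Or.inr rfl)
  · intro hq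
    rcases Set.mem_insert_iff.mp hq with rfl | hq
    · refine ⟨[0], rfl, rfl, allRot_of_forall (by norm_num) ?_⟩
      intro m hm
      simp only [List.length_cons, List.length_nil] at hm
      interval_cases m
      simpa [Fac] using (⟨0, fA_0⟩ : [0] ∈ Fac t)
    · rw [Set.mem_singleton_iff.mp hq]
      refine ⟨[1], rfl, rfl, allRot_of_forall (by norm_num) ?_⟩
      intro m hm
      simp only [List.length_cons, List.length_nil] at hm
      interval_cases m
      simpa [Fac] using (⟨1, fA_1⟩ : [1] ∈ Fac t)

lemma Scl_two : Scl 2 = {Quotient.mk _ [0,0], Quotient.mk _ [0,1], Quotient.mk _ [1,1]} := by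
  ext q
  constructor
  · rintro ⟨u, rfl, hlen, hAll⟩
    have hbin := fac_binary (allRot_fac hAll)
    obtain ⟨a, b, ha, hb, rfl⟩ : ∃ a b, a ≤ 1 ∧ b ≤ 1 ∧ u = [a,b] := by
      rcases u with _|⟨a,u⟩; · simp at hlen
      rcases u with _|⟨b,u⟩; · simp at hlen
      rcases u with _|⟨c,u⟩; swap; · simp at hlen
      exact ⟨a, b, hbin a (by simp), hbin b (by simp), rfl⟩
    simp only [Set.mem_insert_iff, Set.mem_singleton_iff]
    interval_cases a <;> interval_cases b
    · exact Or.inl rfl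
    · exact Or.inr (Or.inl rfl)
    · exact Or.inr (Or.inl (clEq.mpr (by decide)))
    · exact Or.inr (Or.inr rfl)
  · intro hq
    simp only [Set.mem_insert_iff, Set.mem_singleton_iff] at hq
    rcases hq with rfl | rfl | rfl
    · refine ⟨[0,0], rfl, rfl, allRot_of_forall (by norm_num) ?_⟩
      intro m hm
      simp only [List.length_cons, List.length_nil] at hm
      interval_cases m
      · simpa [Fac] using (⟨5, fA_00⟩ : [0,0] ∈ Fac t)
      · rw [show ([0,0]:List ℕ).rotate 1 = [0,0] from by decide]
        exact ⟨5, fA_00⟩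
    · refine ⟨[0,1], rfl, rfl, allRot_of_forall (by norm_num) ?_⟩
      intro m hm
      simp only [List.length_cons, List.length_nil] at hm
      interval_cases m
      · simpa [Fac] using (⟨0, fA_01⟩ : [0,1] ∈ Fac t)
      · rw [show ([0,1]:List ℕ).rotate 1 = [1,0] from by decide]
        exact ⟨2, fA_10⟩
    · refine ⟨[1,1], rfl, rfl, allRot_of_forall (by norm_num) ?_⟩
      intro m hm
      simp only [List.length_cons, List.length_nil] at hm
      interval_cases m
      · simpa [Fac] using (⟨1, fA_11⟩ : [1,1] ∈ Fac t)
      · rw [show ([1,1]:List ℕ).rotate 1 = [1,1] from by decide]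
        exact ⟨1, fA_11⟩

lemma Scl_three : Scl 3 = {Quotient.mk _ [0,1,0], Quotient.mk _ [1,0,1]} := by
  ext q
  constructor
  · rintro ⟨u, rfl, hlen, hAll⟩
    have hbin := fac_binary (allRot_fac hAll)
    obtain ⟨a, b, c, ⟨ha, hb, hc⟩, rfl⟩ := binary_shape3 hlen hbin
    interval_cases a <;> interval_cases b <;> interval_cases c
    all_goals first
      | exact absurd (bad_word hAll ⟨0, rfl⟩ 0 (by decide)) not_false
      | exact absurd (bad_word hAll ⟨0, rfl⟩ 1 (by decide)) not_false
      | exact Set.mem_insert_iff.mpr (Or.inl (clEq.mpr (by decide)))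
      | exact Set.mem_insert_iff.mpr (Or.inr (Set.mem_singleton_iff.mpr (clEq.mpr (by decide))))
  · intro hq
    rcases Set.mem_insert_iff.mp hq with rfl | hq
    · exact ⟨[0,1,0], rfl, rfl, by simpa using iter_mu_sq_allRot ⟨15, fA_sq010⟩ 0⟩
    · rw [Set.mem_singleton_iff.mp hq]
      exact ⟨[1,0,1], rfl, rfl, by simpa using iter_mu_sq_allRot ⟨11, fA_sq101⟩ 0⟩

lemma Scl_four : Scl 4 = {Quotient.mk _ [1,0,0,1], Quotient.mk _ [0,1,0,1]} := by
  ext q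
  constructor
  · rintro ⟨u, rfl, hlen, hAll⟩
    have hbin := fac_binary (allRot_fac hAll)
    obtain ⟨a, b, c, d, ⟨ha, hb, hc, hd⟩, rfl⟩ := binary_shape4 hlen hbin
    interval_cases a <;> interval_cases b <;> interval_cases c <;> interval_cases d
    all_goals first
      | exact absurd (bad_word hAll ⟨0, rfl⟩ 0 (by decide)) not_false
      | exact absurd (bad_word hAll ⟨1, rfl⟩ 0 (by decide)) not_false
      | exact absurd (bad_word hAll ⟨2, rfl⟩ 0 (by decide)) not_false
      | exact absurd (bad_word hAll ⟨3, rfl⟩ 0 (by decide)) not_false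
      | exact absurd (bad_word hAll ⟨0, rfl⟩ 1 (by decide)) not_false
      | exact absurd (bad_word hAll ⟨1, rfl⟩ 1 (by decide)) not_false
      | exact absurd (bad_word hAll ⟨2, rfl⟩ 1 (by decide)) not_false
      | exact absurd (bad_word hAll ⟨3, rfl⟩ 1 (by decide)) not_false
      | exact Set.mem_insert_iff.mpr (Or.inl (clEq.mpr (by decide)))
      | exact Set.mem_insert_iff.mpr (Or.inr (Set.mem_singleton_iff.mpr (clEq.mpr (by decide))))
  · intro hq
    rcases Set.mem_insert_iff.mp hq with rfl | hq
    · exact ⟨[1,0,0,1], rfl, rfl, allRot_of_sq ⟨4, fA_sq1001⟩⟩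
    · rw [Set.mem_singleton_iff.mp hq]
      refine ⟨[0,1,0,1], rfl, rfl, allRot_of_forall (by norm_num) ?_⟩
      intro m hm
      simp only [List.length_cons, List.length_nil] at hm
      interval_cases m
      · simpa [Fac] using (⟨10, fA_0101⟩ : [0,1,0,1] ∈ Fac t)
      · rw [show ([0,1,0,1]:List ℕ).rotate 1 = [1,0,1,0] from by decide]
        exact ⟨2, fA_1010⟩
      · rw [show ([0,1,0,1]:List ℕ).rotate 2 = [0,1,0,1] from by decide]
        exact ⟨10, fA_0101⟩
      · rw [show ([0,1,0,1]:List ℕ).rotate 3 = [1,0,1,0] from by decide]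
        exact ⟨2, fA_1010⟩

/-! ### families -/

lemma mem_Scl_iter (x : List ℕ) (hsq : (x ++ x) ∈ Fac t) (k n : ℕ)
    (hlen : 2^k * x.length = n) : Quotient.mk _ (mu^[k] x) ∈ Scl n :=
  ⟨_, rfl, by rw [iter_mu_length, hlen], iter_mu_sq_allRot hsq k⟩

lemma Scl_step_singleton {m : ℕ} (h5 : 5 ≤ 2*m) {c : List ℕ}
    (hm : Scl m = {Quotient.mk _ c})
    (hmem : Quotient.mk _ (mu c) ∈ Scl (2*m)) :
    Scl (2*m) = {Quotient.mk _ (mu c)} := by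
  apply Set.eq_singleton_iff_unique_mem.mpr ⟨hmem, ?_⟩
  intro q hq
  have h := Scl_even_sub h5 (by omega) hq
  rw [show 2*m/2 = m by omega, hm] at h
  obtain ⟨q', hq', rfl⟩ := h
  rw [Set.mem_singleton_iff.mp hq', muCl_mk]

lemma Scl_step_pair {m : ℕ} (h5 : 5 ≤ 2*m) {c d : List ℕ}
    (hm : Scl m = {Quotient.mk _ c, Quotient.mk _ d})
    (h1 : Quotient.mk _ (mu c) ∈ Scl (2*m))
    (h2 : Quotient.mk _ (mu d) ∈ Scl (2*m)) :
    Scl (2*m) = {Quotient.mk _ (mu c), Quotient.mk _ (mu d)} := by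
  apply Set.Subset.antisymm
  · intro q hq
    have h := Scl_even_sub h5 (by omega) hq
    rw [show 2*m/2 = m by omega, hm] at h
    obtain ⟨q', hq', rfl⟩ := h
    rcases Set.mem_insert_iff.mp hq' with rfl | hq'
    · exact Set.mem_insert_iff.mpr (Or.inl (by rw [muCl_mk]))
    · rw [Set.mem_singleton_iff.mp hq', muCl_mk]
      exact Set.mem_insert_iff.mpr (Or.inr rfl)
  · intro q hq
    rcases Set.mem_insert_iff.mp hq with rfl | hq
    · exact h1
    · rw [Set.mem_singleton_iff.mp hq]; exact h2

lemma sq1001 : ([1,0,0,1] ++ [1,0,0,1] : List ℕ) ∈ Fac t := ⟨4, fA_sq1001⟩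
lemma sq010 : ([0,1,0] ++ [0,1,0] : List ℕ) ∈ Fac t := ⟨15, fA_sq010⟩
lemma sq101 : ([1,0,1] ++ [1,0,1] : List ℕ) ∈ Fac t := ⟨11, fA_sq101⟩

lemma notFac_1100sq : ([1,1,0,0,1,1,0,0] : List ℕ) ∉ Fac t := by
  rintro ⟨i, hi⟩
  have len8 : ([1,1,0,0,1,1,0,0]:List ℕ).length = 8 := rfl
  have h0 : t i = 1 := by simpa using (factorAt_getElem hi (by omega : 0 < ([1,1,0,0,1,1,0,0]:List ℕ).length)).symm
  have h1 : t (i+1) = 1 := by simpa using (factorAt_getElem hi (by omega : 1 < ([1,1,0,0,1,1,0,0]:List ℕ).length)).symm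
  have h3 : t (i+3) = 0 := by simpa using (factorAt_getElem hi (by omega : 3 < ([1,1,0,0,1,1,0,0]:List ℕ).length)).symm
  have h5 : t (i+5) = 1 := by simpa using (factorAt_getElem hi (by omega : 5 < ([1,1,0,0,1,1,0,0]:List ℕ).length)).symm
  have h7 : t (i+7) = 0 := by simpa using (factorAt_getElem hi (by omega : 7 < ([1,1,0,0,1,1,0,0]:List ℕ).length)).symm
  rcases Nat.even_or_odd i with ⟨j, hj⟩ | ⟨j, hj⟩
  · exact tm_block j (by rw [show 2*j = i by omega, h0, h1])
  · apply notFac_alt5 0 (by norm_num)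
    refine ⟨j, factorAt_iff.mpr fun k hk => ?_⟩
    have hk5 : k < 5 := by simpa using hk
    have v0 : t j = 0 := by
      have e0 := tm_block j
      rw [show 2*j+1 = i by omega, h0] at e0
      have := tm_le_one (2*j)
      rw [← tm_two_mul j]; omega
    have v1 : t (j+1) = 1 := by rw [← tm_two_mul (j+1), show 2*(j+1) = i+1 by omega, h1]
    have v2 : t (j+2) = 0 := by rw [← tm_two_mul (j+2), show 2*(j+2) = i+3 by omega, h3]
    have v3 : t (j+3) = 1 := by rw [← tm_two_mul (j+3), show 2*(j+3) = i+5 by omega, h5]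
    have v4 : t (j+4) = 0 := by rw [← tm_two_mul (j+4), show 2*(j+4) = i+7 by omega, h7]
    interval_cases k
    · simpa using v0.symm
    · simpa using v1.symm
    · simpa using v2.symm
    · simpa using v3.symm
    · simpa using v4.symm

lemma Scl_eight : Scl 8 = {Quotient.mk _ (mu [1,0,0,1])} := by
  apply Set.eq_singleton_iff_unique_mem.mpr
  constructor
  · have := mem_Scl_iter [1,0,0,1] sq1001 1 8 (by norm_num)
    simpa using this
  · intro q hq
    obtain ⟨u, humk, hulen, huAll⟩ := hq
    have h := Scl_even_sub (by norm_num) (by norm_num) ⟨u, humk, hulen, huAll⟩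
    rw [show (8:ℕ)/2 = 4 by norm_num, Scl_four] at h
    obtain ⟨q', hq', hqq⟩ := h
    rcases Set.mem_insert_iff.mp hq' with rfl | hq'
    · rw [← hqq, muCl_mk]
    · exfalso
      rw [Set.mem_singleton_iff.mp hq', muCl_mk] at hqq
      subst hqq
      exact notFac_1100sq (huAll _ ((clEq.mp humk).trans (by decide)))

lemma Scl_pow2 (k : ℕ) : Scl (2^(k+3)) = {Quotient.mk _ (mu^[k+1] [1,0,0,1])} := by
  induction k with
  | zero => simpa using Scl_eight
  | succ k ih =>
    have h2 : 2^(k+1+3) = 2 * 2^(k+3) := by ring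
    rw [h2]
    have h8 : (8:ℕ) ≤ 2^(k+3) := by
      calc (8:ℕ) = 2^3 := rfl
      _ ≤ 2^(k+3) := Nat.pow_le_pow_right (by norm_num) (by omega)
    have := Scl_step_singleton (c := mu^[k+1] [1,0,0,1]) (by omega) ih ?_
    · rw [this, ← Function.iterate_succ_apply' mu]
    · rw [← Function.iterate_succ_apply' mu]
      exact mem_Scl_iter [1,0,0,1] sq1001 (k+2) _ (by rw [show ([1,0,0,1]:List ℕ).length = 4 from rfl]; ring)

lemma Scl_3pow2 (k : ℕ) :
    Scl (3 * 2^k) = {Quotient.mk _ (mu^[k] [0,1,0]), Quotient.mk _ (mu^[k] [1,0,1])} := by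
  induction k with
  | zero => simpa using Scl_three
  | succ k ih =>
    have h2 : 3 * 2^(k+1) = 2 * (3 * 2^k) := by ring
    rw [h2]
    have := Scl_step_pair (c := mu^[k] [0,1,0]) (d := mu^[k] [1,0,1])
      (by have := Nat.one_le_two_pow (n := k); omega) ih ?_ ?_
    · rw [this, ← Function.iterate_succ_apply' mu, ← Function.iterate_succ_apply' mu]
    · rw [← Function.iterate_succ_apply' mu]
      exact mem_Scl_iter [0,1,0] sq010 (k+1) _ (by rw [show ([0,1,0]:List ℕ).length = 3 from rfl]; ring)
    · rw [← Function.iterate_succ_apply' mu]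
      exact mem_Scl_iter [1,0,1] sq101 (k+1) _ (by rw [show ([1,0,1]:List ℕ).length = 3 from rfl]; ring)

lemma Scl_odd_tower {m : ℕ} (hm5 : 5 ≤ m) (hodd : m % 2 = 1) (a : ℕ) :
    Scl (2^a * m) = ∅ := by
  induction a with
  | zero => simpa using Scl_odd m hm5 hodd
  | succ a ih =>
    rw [Set.eq_empty_iff_forall_notMem]
    intro q hq
    have hx : 2^(a+1) * m = 2 * (2^a * m) := by ring
    have h1 : 1 ≤ 2^a := Nat.one_le_two_pow
    have h5 : 5 ≤ 2^(a+1) * m := by rw [hx]; nlinarith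
    have heven : (2^(a+1) * m) % 2 = 0 := by rw [hx]; omega
    have h := Scl_even_sub h5 heven hq
    rw [hx, show 2 * (2^a*m) / 2 = 2^a * m by omega, ih] at h
    simp at h

/-! ### final counting -/

lemma ncard_pair' {α : Type*} {a b : α} (h : a ≠ b) : ({a, b} : Set α).ncard = 2 :=
  Set.ncard_pair h

lemma mk_ne_of_not_rot {a b : List ℕ} (h : ¬ a ~r b) :
    Quotient.mk (List.IsRotated.setoid ℕ) a ≠ Quotient.mk _ b :=
  fun hc => h (clEq.mp hc)

theorem lie_main (n : ℕ) :
    ((n = 0 ∨ ∃ k : ℕ, 3 ≤ k ∧ n = 2 ^ k) → (Scl n).ncard = 1) ∧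
    ((n = 1 ∨ n = 4 ∨ ∃ k : ℕ, n = 3 * 2 ^ k) → (Scl n).ncard = 2) ∧
    (n = 2 → (Scl n).ncard = 3) ∧
    (¬ (n = 0 ∨ (∃ k : ℕ, 3 ≤ k ∧ n = 2 ^ k) ∨ n = 1 ∨ n = 4 ∨
        (∃ k : ℕ, n = 3 * 2 ^ k) ∨ n = 2) → (Scl n).ncard = 0) := by
  refine ⟨?_, ?_, ?_, ?_⟩
  · rintro (rfl | ⟨k, hk3, rfl⟩)
    · rw [Scl_zero]; exact Set.ncard_singleton _
    · rw [show k = (k - 3) + 3 by omega, Scl_pow2]; exact Set.ncard_singleton _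
  · rintro (rfl | rfl | ⟨k, rfl⟩)
    · rw [Scl_one]; exact ncard_pair' (mk_ne_of_not_rot (by decide))
    · rw [Scl_four]; exact ncard_pair' (mk_ne_of_not_rot (by decide))
    · rw [Scl_3pow2]; exact ncard_pair' (mk_ne_of_not_rot (iter_mu_not_rot k))
  · rintro rfl
    rw [Scl_two]
    rw [Set.ncard_insert_of_notMem ?_ ((Set.finite_singleton _).insert _)]
    · rw [ncard_pair' (mk_ne_of_not_rot (by decide))]
    · simp only [Set.mem_insert_iff, Set.mem_singleton_iff]
      push_neg
      exact ⟨mk_ne_of_not_rot (by decide), mk_ne_of_not_rot (by decide)⟩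
  · intro hn
    push_neg at hn
    obtain ⟨hn0, hnpow, hn1, hn4, hn3, hn2⟩ := hn
    obtain ⟨a, m, hmodd, hm5, rfl⟩ : ∃ a m, m % 2 = 1 ∧ 5 ≤ m ∧ n = 2^a * m := by
      set a := n.factorization 2 with ha
      set m := n / 2^a with hm
      have hself : 2^a * m = n := Nat.ordProj_mul_ordCompl_eq_self n 2
      have hndvd : ¬ 2 ∣ m := Nat.not_dvd_ordCompl Nat.prime_two hn0
      have hmo : m % 2 = 1 := by omega
      clear_value a m
      refine ⟨a, m, hmo, ?_, hself.symm⟩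
      have hm0 : m ≠ 0 := by rintro rfl; simp at hself; exact hn0 hself.symm
      have hm1 : m ≠ 1 := by
        rintro rfl
        rw [mul_one] at hself
        rcases Nat.lt_or_ge a 3 with h3 | h3
        · interval_cases a <;> norm_num at hself <;> omega
        · exact hnpow a h3 hself.symm
      have hm3 : m ≠ 3 := by
        rintro rfl
        exact hn3 a (by omega)
      omega
    rw [Scl_odd_tower hm5 hmodd a]
    simp


theorem lie_thueMorse (n : ℕ) :
    ((n = 0 ∨ ∃ k : ℕ, 3 ≤ k ∧ n = 2 ^ k) → LieComplexity thueMorse n = 1) ∧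
    ((n = 1 ∨ n = 4 ∨ ∃ k : ℕ, n = 3 * 2 ^ k) → LieComplexity thueMorse n = 2) ∧
    (n = 2 → LieComplexity thueMorse n = 3) ∧
    (¬ (n = 0 ∨ (∃ k : ℕ, 3 ≤ k ∧ n = 2 ^ k) ∨ n = 1 ∨ n = 4 ∨
        (∃ k : ℕ, n = 3 * 2 ^ k) ∨ n = 2) → LieComplexity thueMorse n = 0) := by
  have hL : LieComplexity thueMorse n = (Scl n).ncard := rfl
  rw [hL]
  exact lie_main n
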